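/- Let 𝐂 be a premulticategory. If t : Γ,A,Γ' → B and u : Δ → A are both central multimaps, then the substitute t[Γ,u,Γ'] : Γ,Δ,Γ' → B is central. -/
import Mathlib


universe u v

/-- A premulticategory (Staton–Levy): objects, multimaps indexed by a list of sources and a
target, identities, and a one-at-a-time substitution operation satisfying unit and
associativity laws. -/
structure PreMulticat : Type (max (u + 1) (v + 1)) where
  Obj : Type u
  Hom : List Obj → Obj → Type v
  id : ∀ A : Obj, Hom [A] A
  subst : ∀ (Γ : List Obj) (A : Obj) (Γ' : List Obj) {B : Obj},
      Hom (Γ ++ (A :: Γ')) B → ∀ {Δ : List Obj}, Hom Δ A → Hom (Γ ++ (Δ ++ Γ')) B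
  id_subst : ∀ {A : Obj} {Δ : List Obj} (u : Hom Δ A),
      subst [] A [] (id A) u
        = _root_.cast (congrArg (fun l => Hom l A) (List.append_nil Δ).symm) u
  subst_id : ∀ (Γ : List Obj) (A : Obj) (Γ' : List Obj) {B : Obj}
      (t : Hom (Γ ++ (A :: Γ')) B), subst Γ A Γ' t (id A) = t
  subst_assoc : ∀ (Γ₁ : List Obj) (B : Obj) (Γ₁' : List Obj) {C : Obj}
      (t : Hom (Γ₁ ++ (B :: Γ₁')) C) (Γ₂ : List Obj) (A : Obj) (Γ₂' : List Obj)
      (u : Hom (Γ₂ ++ (A :: Γ₂')) B) {Δ : List Obj} (v : Hom Δ A),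
      subst (Γ₁ ++ Γ₂) A (Γ₂' ++ Γ₁')
          (_root_.cast (congrArg (fun l => Hom l C) (by simp)) (subst Γ₁ B Γ₁' t u)) v
        = _root_.cast (congrArg (fun l => Hom l C) (by simp))
            (subst Γ₁ B Γ₁' t (subst Γ₂ A Γ₂' u v))

namespace PreMulticat

variable (M : PreMulticat.{u, v})

/-- Transport of a multimap along an equality of contexts. -/
def cst {Γ Γ' : List M.Obj} {B : M.Obj} (h : Γ = Γ') (t : M.Hom Γ B) : M.Hom Γ' B :=
  _root_.cast (congrArg (fun l => M.Hom l B) h) t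

/-- A multimap `u : Γ → A` is central if substituting it and any other multimap into any third
multimap can be done in either order (in both relative positions). -/
def Central {Γ : List M.Obj} {A : M.Obj} (u : M.Hom Γ A) : Prop :=
  (∀ (Δ₁ Δ₂ Δ₃ : List M.Obj) (B : M.Obj) {C : M.Obj}
      (t : M.Hom (Δ₁ ++ (A :: (Δ₂ ++ (B :: Δ₃)))) C) (Λ : List M.Obj) (v : M.Hom Λ B),
      M.cst (by simp)
          (M.subst (Δ₁ ++ (Γ ++ Δ₂)) B Δ₃
            (M.cst (by simp) (M.subst Δ₁ A (Δ₂ ++ (B :: Δ₃)) t u)) v)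
        = M.subst Δ₁ A (Δ₂ ++ (Λ ++ Δ₃))
            (M.cst (by simp) (M.subst (Δ₁ ++ (A :: Δ₂)) B Δ₃ (M.cst (by simp) t) v)) u)
  ∧ (∀ (Δ₁ Δ₂ Δ₃ : List M.Obj) (B : M.Obj) {C : M.Obj}
      (t' : M.Hom (Δ₁ ++ (B :: (Δ₂ ++ (A :: Δ₃)))) C) (Λ : List M.Obj) (v : M.Hom Λ B),
      M.cst (by simp)
          (M.subst Δ₁ B (Δ₂ ++ (Γ ++ Δ₃))
            (M.cst (by simp) (M.subst (Δ₁ ++ (B :: Δ₂)) A Δ₃ (M.cst (by simp) t') u)) v)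
        = M.subst (Δ₁ ++ (Λ ++ Δ₂)) A Δ₃
            (M.cst (by simp) (M.subst Δ₁ B (Δ₂ ++ (A :: Δ₃)) (M.cst (by simp) t') v)) u)

end PreMulticat

namespace PreMulticat

variable (M : PreMulticat.{u, v})

lemma cst_heq {Γ Γ' : List M.Obj} {B : M.Obj} (h : Γ = Γ') (t : M.Hom Γ B) :
    HEq (M.cst h t) t := cast_heq _ _

lemma cst_cst_heq {Γ Γ₁ Γ₂ : List M.Obj} {B : M.Obj} (h₁ : Γ = Γ₁) (h₂ : Γ = Γ₂)
    (t : M.Hom Γ B) : HEq (M.cst h₁ t) (M.cst h₂ t) :=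
  (M.cst_heq h₁ t).trans (M.cst_heq h₂ t).symm

lemma subst_hcongr {Γ₁ Γ₂ : List M.Obj} (hΓ : Γ₁ = Γ₂) (A : M.Obj) {Γ₁' Γ₂' : List M.Obj}
    (hΓ' : Γ₁' = Γ₂') {B : M.Obj} {t₁ : M.Hom (Γ₁ ++ (A :: Γ₁')) B}
    {t₂ : M.Hom (Γ₂ ++ (A :: Γ₂')) B} (htt : HEq t₁ t₂) {Δ : List M.Obj} (v : M.Hom Δ A) :
    HEq (M.subst Γ₁ A Γ₁' t₁ v) (M.subst Γ₂ A Γ₂' t₂ v) := by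
  subst hΓ; subst hΓ'; cases eq_of_heq htt; rfl

lemma assoc_heq (Γ₁ : List M.Obj) (B : M.Obj) (Γ₁' : List M.Obj) {C : M.Obj}
    (t : M.Hom (Γ₁ ++ (B :: Γ₁')) C) (Γ₂ : List M.Obj) (A : M.Obj) (Γ₂' : List M.Obj)
    (u : M.Hom (Γ₂ ++ (A :: Γ₂')) B) {Δ : List M.Obj} (v : M.Hom Δ A)
    (h : Γ₁ ++ ((Γ₂ ++ (A :: Γ₂')) ++ Γ₁') = (Γ₁ ++ Γ₂) ++ (A :: (Γ₂' ++ Γ₁'))) :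
    HEq (M.subst (Γ₁ ++ Γ₂) A (Γ₂' ++ Γ₁') (M.cst h (M.subst Γ₁ B Γ₁' t u)) v)
      (M.subst Γ₁ B Γ₁' t (M.subst Γ₂ A Γ₂' u v)) :=
  (heq_of_eq (M.subst_assoc Γ₁ B Γ₁' t Γ₂ A Γ₂' u v)).trans (cast_heq _ _)

end PreMulticat

open PreMulticat in
/-- in a premulticategory, if `t : Γ,A,Γ' → B` and `u : Δ → A` are both central,
then so is the substitute `t[Γ,u,Γ'] : Γ,Δ,Γ' → B`. -/
theorem stmt_12 (M : PreMulticat.{u, v}) (Γ : List M.Obj) (A : M.Obj) (Γ' : List M.Obj)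
    {B : M.Obj} (t : M.Hom (Γ ++ (A :: Γ')) B) {Δ : List M.Obj} (u : M.Hom Δ A)
    (ht : M.Central t) (hu : M.Central u) :
    M.Central (M.subst Γ A Γ' t u) := by
  constructor
  · intro Δ₁ Δ₂ Δ₃ B' C s Λ v
    apply eq_of_heq
    refine (M.cst_heq _ _).trans ?_
    -- abbreviations
    -- S := s[t]
    have e2 : HEq (M.subst Δ₁ B (Δ₂ ++ (B' :: Δ₃)) s (M.subst Γ A Γ' t u))
        (M.subst (Δ₁ ++ Γ) A ((Γ' ++ Δ₂) ++ (B' :: Δ₃))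
          (M.cst (by simp) (M.subst Δ₁ B (Δ₂ ++ (B' :: Δ₃)) s t)) u) := by
      refine ((M.assoc_heq Δ₁ B (Δ₂ ++ (B' :: Δ₃)) s Γ A Γ' t u (by simp)).symm).trans ?_
      exact M.subst_hcongr rfl A (by simp) (M.cst_cst_heq _ _ _) u
    have e3 : HEq
        (M.subst (Δ₁ ++ ((Γ ++ (Δ ++ Γ')) ++ Δ₂)) B' Δ₃
          (M.cst (by simp) (M.subst Δ₁ B (Δ₂ ++ (B' :: Δ₃)) s (M.subst Γ A Γ' t u))) v)
        (M.subst ((Δ₁ ++ Γ) ++ (Δ ++ (Γ' ++ Δ₂))) B' Δ₃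
          (M.cst (by simp) (M.subst (Δ₁ ++ Γ) A ((Γ' ++ Δ₂) ++ (B' :: Δ₃))
            (M.cst (by simp) (M.subst Δ₁ B (Δ₂ ++ (B' :: Δ₃)) s t)) u)) v) :=
      M.subst_hcongr (by simp) B' rfl
        ((M.cst_heq _ _).trans (e2.trans (M.cst_heq _ _).symm)) v
    have e4 := hu.1 (Δ₁ ++ Γ) (Γ' ++ Δ₂) Δ₃ B'
      (M.cst (by simp) (M.subst Δ₁ B (Δ₂ ++ (B' :: Δ₃)) s t)) Λ v
    have e6 := ht.1 Δ₁ Δ₂ Δ₃ B' s Λ v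
    have e7 : HEq
        (M.subst ((Δ₁ ++ Γ) ++ (A :: (Γ' ++ Δ₂))) B' Δ₃
          (M.cst (by simp) ((M.cst (by simp) (M.subst Δ₁ B (Δ₂ ++ (B' :: Δ₃)) s t) : M.Hom ((Δ₁ ++ Γ) ++ (A :: ((Γ' ++ Δ₂) ++ (B' :: Δ₃)))) C))) v)
        (M.subst Δ₁ B (Δ₂ ++ (Λ ++ Δ₃))
          (M.cst (by simp) (M.subst (Δ₁ ++ (B :: Δ₂)) B' Δ₃ (M.cst (by simp) s) v)) t) := by
      refine HEq.trans ?_ ((M.cst_heq _ _).symm.trans (heq_of_eq e6))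
      exact M.subst_hcongr (by simp) B' rfl
        (((M.cst_heq _ _).trans (M.cst_heq _ _)).trans (M.cst_heq _ _).symm) v
    have e8 : HEq
        (M.subst (Δ₁ ++ Γ) A ((Γ' ++ Δ₂) ++ (Λ ++ Δ₃))
          (M.cst (by simp) (M.subst ((Δ₁ ++ Γ) ++ (A :: (Γ' ++ Δ₂))) B' Δ₃
            (M.cst (by simp) ((M.cst (by simp) (M.subst Δ₁ B (Δ₂ ++ (B' :: Δ₃)) s t) : M.Hom ((Δ₁ ++ Γ) ++ (A :: ((Γ' ++ Δ₂) ++ (B' :: Δ₃)))) C))) v)) u)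
        (M.subst (Δ₁ ++ Γ) A (Γ' ++ (Δ₂ ++ (Λ ++ Δ₃)))
          (M.cst (by simp) (M.subst Δ₁ B (Δ₂ ++ (Λ ++ Δ₃))
            (M.cst (by simp) (M.subst (Δ₁ ++ (B :: Δ₂)) B' Δ₃ (M.cst (by simp) s) v)) t)) u) :=
      M.subst_hcongr rfl A (by simp)
        ((M.cst_heq _ _).trans (e7.trans (M.cst_heq _ _).symm)) u
    have e9 : HEq
        (M.subst (Δ₁ ++ Γ) A (Γ' ++ (Δ₂ ++ (Λ ++ Δ₃)))
          (M.cst (by simp) (M.subst Δ₁ B (Δ₂ ++ (Λ ++ Δ₃))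
            (M.cst (by simp) (M.subst (Δ₁ ++ (B :: Δ₂)) B' Δ₃ (M.cst (by simp) s) v)) t)) u)
        (M.subst Δ₁ B (Δ₂ ++ (Λ ++ Δ₃))
          (M.cst (by simp) (M.subst (Δ₁ ++ (B :: Δ₂)) B' Δ₃ (M.cst (by simp) s) v))
          (M.subst Γ A Γ' t u)) :=
      M.assoc_heq Δ₁ B (Δ₂ ++ (Λ ++ Δ₃))
        (M.cst (by simp) (M.subst (Δ₁ ++ (B :: Δ₂)) B' Δ₃ (M.cst (by simp) s) v))
        Γ A Γ' t u (by simp)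
    exact e3.trans (((M.cst_heq _ _).symm.trans (heq_of_eq e4)).trans (e8.trans e9))
  · intro Δ₁ Δ₂ Δ₃ B' C s Λ v
    apply eq_of_heq
    refine (M.cst_heq _ _).trans ?_
    have f2 : HEq (M.subst (Δ₁ ++ (B' :: Δ₂)) B Δ₃ (M.cst (by simp) s) (M.subst Γ A Γ' t u))
        (M.subst ((Δ₁ ++ (B' :: Δ₂)) ++ Γ) A (Γ' ++ Δ₃)
          (M.cst (by simp) (M.subst (Δ₁ ++ (B' :: Δ₂)) B Δ₃ (M.cst (by simp) s) t)) u) :=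
      (M.assoc_heq (Δ₁ ++ (B' :: Δ₂)) B Δ₃ (M.cst (by simp) s) Γ A Γ' t u (by simp)).symm
    have fb : HEq
        (M.subst ((Δ₁ ++ (B' :: Δ₂)) ++ Γ) A (Γ' ++ Δ₃)
          (M.cst (by simp) (M.subst (Δ₁ ++ (B' :: Δ₂)) B Δ₃ (M.cst (by simp) s) t)) u)
        (M.subst (Δ₁ ++ (B' :: (Δ₂ ++ Γ))) A (Γ' ++ Δ₃)
          (M.cst (by simp) ((M.cst (by simp) (M.subst (Δ₁ ++ (B' :: Δ₂)) B Δ₃ (M.cst (by simp) s) t)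
            : M.Hom (Δ₁ ++ (B' :: ((Δ₂ ++ Γ) ++ (A :: (Γ' ++ Δ₃))))) C))) u) :=
      M.subst_hcongr (by simp) A rfl
        ((M.cst_heq _ _).trans ((M.cst_heq _ _).trans (M.cst_heq _ _)).symm) u
    have f3 : HEq
        (M.subst Δ₁ B' (Δ₂ ++ ((Γ ++ (Δ ++ Γ')) ++ Δ₃))
          (M.cst (by simp) (M.subst (Δ₁ ++ (B' :: Δ₂)) B Δ₃ (M.cst (by simp) s)
            (M.subst Γ A Γ' t u))) v)
        (M.subst Δ₁ B' ((Δ₂ ++ Γ) ++ (Δ ++ (Γ' ++ Δ₃)))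
          (M.cst (by simp) (M.subst (Δ₁ ++ (B' :: (Δ₂ ++ Γ))) A (Γ' ++ Δ₃)
            (M.cst (by simp) ((M.cst (by simp) (M.subst (Δ₁ ++ (B' :: Δ₂)) B Δ₃ (M.cst (by simp) s) t)
              : M.Hom (Δ₁ ++ (B' :: ((Δ₂ ++ Γ) ++ (A :: (Γ' ++ Δ₃))))) C))) u)) v) :=
      M.subst_hcongr rfl B' (by simp)
        ((M.cst_heq _ _).trans ((f2.trans fb).trans (M.cst_heq _ _).symm)) v
    have f4 := hu.2 Δ₁ (Δ₂ ++ Γ) (Γ' ++ Δ₃) B'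
      (M.cst (by simp) (M.subst (Δ₁ ++ (B' :: Δ₂)) B Δ₃ (M.cst (by simp) s) t)) Λ v
    have f6 := ht.2 Δ₁ Δ₂ Δ₃ B' s Λ v
    have f7 : HEq
        (M.subst Δ₁ B' ((Δ₂ ++ Γ) ++ (A :: (Γ' ++ Δ₃)))
          (M.cst (by simp) ((M.cst (by simp) (M.subst (Δ₁ ++ (B' :: Δ₂)) B Δ₃ (M.cst (by simp) s) t)
            : M.Hom (Δ₁ ++ (B' :: ((Δ₂ ++ Γ) ++ (A :: (Γ' ++ Δ₃))))) C))) v)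
        (M.subst (Δ₁ ++ (Λ ++ Δ₂)) B Δ₃
          (M.cst (by simp) (M.subst Δ₁ B' (Δ₂ ++ (B :: Δ₃)) (M.cst (by simp) s) v)) t) := by
      refine HEq.trans ?_ ((M.cst_heq _ _).symm.trans (heq_of_eq f6))
      exact M.subst_hcongr rfl B' (by simp)
        (((M.cst_heq _ _).trans (M.cst_heq _ _)).trans (M.cst_heq _ _).symm) v
    have f8 : HEq
        (M.subst (Δ₁ ++ (Λ ++ (Δ₂ ++ Γ))) A (Γ' ++ Δ₃)
          (M.cst (by simp) (M.subst Δ₁ B' ((Δ₂ ++ Γ) ++ (A :: (Γ' ++ Δ₃)))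
            (M.cst (by simp) ((M.cst (by simp) (M.subst (Δ₁ ++ (B' :: Δ₂)) B Δ₃ (M.cst (by simp) s) t)
              : M.Hom (Δ₁ ++ (B' :: ((Δ₂ ++ Γ) ++ (A :: (Γ' ++ Δ₃))))) C))) v)) u)
        (M.subst ((Δ₁ ++ (Λ ++ Δ₂)) ++ Γ) A (Γ' ++ Δ₃)
          (M.cst (by simp) (M.subst (Δ₁ ++ (Λ ++ Δ₂)) B Δ₃
            (M.cst (by simp) (M.subst Δ₁ B' (Δ₂ ++ (B :: Δ₃)) (M.cst (by simp) s) v)) t)) u) :=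
      M.subst_hcongr (by simp) A rfl
        ((M.cst_heq _ _).trans (f7.trans (M.cst_heq _ _).symm)) u
    have f9 : HEq
        (M.subst ((Δ₁ ++ (Λ ++ Δ₂)) ++ Γ) A (Γ' ++ Δ₃)
          (M.cst (by simp) (M.subst (Δ₁ ++ (Λ ++ Δ₂)) B Δ₃
            (M.cst (by simp) (M.subst Δ₁ B' (Δ₂ ++ (B :: Δ₃)) (M.cst (by simp) s) v)) t)) u)
        (M.subst (Δ₁ ++ (Λ ++ Δ₂)) B Δ₃
          (M.cst (by simp) (M.subst Δ₁ B' (Δ₂ ++ (B :: Δ₃)) (M.cst (by simp) s) v))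
          (M.subst Γ A Γ' t u)) :=
      M.assoc_heq (Δ₁ ++ (Λ ++ Δ₂)) B Δ₃
        (M.cst (by simp) (M.subst Δ₁ B' (Δ₂ ++ (B :: Δ₃)) (M.cst (by simp) s) v))
        Γ A Γ' t u (by simp)
    exact f3.trans (((M.cst_heq _ _).symm.trans (heq_of_eq f4)).trans (f8.trans f9))
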